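/- For p, q > 1, the function x ↦ log(arsinh_{p,q}(e^x)) is concave on ℝ restricted to where e^x < 1 (i.e. x < 0). -/

import Mathlib

open Real Set

noncomputable def arsinhpq (p q x : ℝ) : ℝ :=
  ∫ t in (0:ℝ)..x, (1 + t ^ q) ^ (-1/p)

namespace Arsinhpq

variable {p q : ℝ}

/-- The integrand. -/
noncomputable def g (p q t : ℝ) : ℝ := (1 + t ^ q) ^ (-1/p)

lemma one_add_pos (hq : 0 < q) {t : ℝ} (ht : 0 ≤ t) : 0 < 1 + t ^ q := by
  have := Real.rpow_nonneg ht q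
  linarith

lemma g_pos (hq : 0 < q) {t : ℝ} (ht : 0 ≤ t) : 0 < g p q t :=
  Real.rpow_pos_of_pos (one_add_pos hq ht) _

lemma g_contOn (hq : 0 < q) : ContinuousOn (g p q) (Ici 0) := by
  apply ContinuousOn.rpow_const
  · exact (continuous_const.add (Real.continuous_rpow_const hq.le)).continuousOn
  · exact fun t ht => Or.inl (ne_of_gt (one_add_pos hq ht))

lemma g_intble (hq : 0 < q) {a b : ℝ} (ha : 0 ≤ a) (hb : 0 ≤ b) :
    IntervalIntegrable (g p q) MeasureTheory.volume a b := by
  apply ContinuousOn.intervalIntegrable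
  refine (g_contOn hq).mono fun x hx => ?_
  rcases le_total a b with h | h
  · rw [Set.uIcc_of_le h] at hx; exact le_trans ha hx.1
  · rw [Set.uIcc_of_ge h] at hx; exact le_trans hb hx.1

lemma F_eq (u : ℝ) : arsinhpq p q u = ∫ t in (0:ℝ)..u, g p q t := rfl

lemma F_pos (hq : 0 < q) {u : ℝ} (hu : 0 < u) : 0 < arsinhpq p q u := by
  rw [F_eq]
  apply intervalIntegral.intervalIntegral_pos_of_pos_on (g_intble hq le_rfl hu.le)
  · exact fun x hx => g_pos hq hx.1.le
  · exact hu

lemma F_hasDerivAt (hq : 0 < q) {u : ℝ} (hu : 0 < u) :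
    HasDerivAt (arsinhpq p q) (g p q u) u := by
  have hcontAt : ContinuousAt (g p q) u := by
    have h1 : ContinuousAt (fun t : ℝ => 1 + t ^ q) u :=
      continuousAt_const.add (Real.continuousAt_rpow_const u q (Or.inr hq.le))
    have h2 : ContinuousAt (fun x : ℝ => x ^ (-1/p)) (1 + u ^ q) :=
      Real.continuousAt_rpow_const _ _ (Or.inl (ne_of_gt (one_add_pos hq hu.le)))
    exact ContinuousAt.comp (x := u) h2 h1
  refine intervalIntegral.integral_hasDerivAt_right (g_intble hq le_rfl hu.le) ?_ hcontAt
  refine AEStronglyMeasurable.stronglyMeasurableAtFilter_of_mem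
    (s := Ioi (0:ℝ)) ?_ (Ioi_mem_nhds hu)
  exact ((g_contOn hq).mono Ioi_subset_Ici_self).aestronglyMeasurable measurableSet_Ioi

lemma F_scaled (hq : 0 < q) {u : ℝ} (hu : 0 < u) :
    arsinhpq p q u = u * ∫ s in (0:ℝ)..1, g p q (u * s) := by
  rw [intervalIntegral.integral_comp_mul_left _ (ne_of_gt hu)]
  rw [mul_zero, mul_one, smul_eq_mul, F_eq]
  field_simp

lemma pointwise (hp : 1 < p) (hq : 0 < q) {u v s : ℝ} (hu : 0 < u) (huv : u ≤ v)
    (hs : s ∈ Icc (0:ℝ) 1) :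
    g p q v * g p q (u * s) ≤ g p q u * g p q (v * s) := by
  have hv : 0 < v := hu.trans_le huv
  have hs0 : 0 ≤ s := hs.1
  have hs1 : s ≤ 1 := hs.2
  have hus : 0 ≤ u * s := mul_nonneg hu.le hs0
  have hvs : 0 ≤ v * s := mul_nonneg hv.le hs0
  have hne : -1/p ≤ 0 := by
    have : 0 < p := lt_trans one_pos hp
    rw [neg_div]
    exact neg_nonpos.mpr (le_of_lt (div_pos one_pos this))
  -- combine products of rpow into a single rpow
  unfold g
  rw [← Real.mul_rpow (one_add_pos hq hv.le).le (one_add_pos hq hus).le,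
      ← Real.mul_rpow (one_add_pos hq hu.le).le (one_add_pos hq hvs).le]
  apply Real.rpow_le_rpow_of_nonpos
  · positivity
  · -- (1 + u^q) * (1 + (v*s)^q) ≤ (1 + v^q) * (1 + (u*s)^q)
    have hmu : (u * s) ^ q = u ^ q * s ^ q := Real.mul_rpow hu.le hs0
    have hmv : (v * s) ^ q = v ^ q * s ^ q := Real.mul_rpow hv.le hs0
    have hab : u ^ q ≤ v ^ q := Real.rpow_le_rpow hu.le huv hq.le
    have hc1 : s ^ q ≤ 1 := Real.rpow_le_one hs0 hs1 hq.le
    have hc0 : 0 ≤ s ^ q := Real.rpow_nonneg hs0 q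
    rw [hmu, hmv]
    nlinarith [hab, hc1, hc0]
  · exact hne

lemma key (hp : 1 < p) (hq : 0 < q) {u v : ℝ} (hu : 0 < u) (huv : u ≤ v) :
    v * g p q v * arsinhpq p q u ≤ u * g p q u * arsinhpq p q v := by
  have hv : 0 < v := hu.trans_le huv
  rw [F_scaled hq hu, F_scaled hq hv]
  have hIu : IntervalIntegrable (fun s => g p q v * g p q (u * s))
      MeasureTheory.volume 0 1 := by
    apply ContinuousOn.intervalIntegrable
    apply ContinuousOn.mul continuousOn_const
    apply (g_contOn hq).comp (continuous_const.mul continuous_id).continuousOn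
    intro s hs
    rw [uIcc_of_le zero_le_one] at hs
    exact mul_nonneg hu.le hs.1
  have hIv : IntervalIntegrable (fun s => g p q u * g p q (v * s))
      MeasureTheory.volume 0 1 := by
    apply ContinuousOn.intervalIntegrable
    apply ContinuousOn.mul continuousOn_const
    apply (g_contOn hq).comp (continuous_const.mul continuous_id).continuousOn
    intro s hs
    rw [uIcc_of_le zero_le_one] at hs
    exact mul_nonneg hv.le hs.1
  have hmono : (∫ s in (0:ℝ)..1, g p q v * g p q (u * s)) ≤
      ∫ s in (0:ℝ)..1, g p q u * g p q (v * s) :=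
    intervalIntegral.integral_mono_on zero_le_one hIu hIv
      (fun s hs => pointwise hp hq hu huv hs)
  rw [intervalIntegral.integral_const_mul, intervalIntegral.integral_const_mul] at hmono
  calc v * g p q v * (u * ∫ s in (0:ℝ)..1, g p q (u * s))
      = (u * v) * (g p q v * ∫ s in (0:ℝ)..1, g p q (u * s)) := by ring
    _ ≤ (u * v) * (g p q u * ∫ s in (0:ℝ)..1, g p q (v * s)) := by
        apply mul_le_mul_of_nonneg_left hmono (by positivity)
    _ = u * g p q u * (v * ∫ s in (0:ℝ)..1, g p q (v * s)) := by ring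

end Arsinhpq

theorem stmt12 (p q : ℝ) (hp : 1 < p) (hq : 1 < q) :
    ConcaveOn ℝ (Iio (0:ℝ)) (fun x => Real.log (arsinhpq p q (Real.exp x))) := by
  have hq0 : 0 < q := lt_trans one_pos hq
  set f : ℝ → ℝ := fun x => Real.log (arsinhpq p q (Real.exp x)) with hf
  have hderiv : ∀ x : ℝ, HasDerivAt f
      (Arsinhpq.g p q (Real.exp x) * Real.exp x / arsinhpq p q (Real.exp x)) x := by
    intro x
    have h1 : HasDerivAt (fun x : ℝ => arsinhpq p q (Real.exp x))
        (Arsinhpq.g p q (Real.exp x) * Real.exp x) x :=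
      (Arsinhpq.F_hasDerivAt hq0 (Real.exp_pos x)).comp x (Real.hasDerivAt_exp x)
    exact h1.log (ne_of_gt (Arsinhpq.F_pos hq0 (Real.exp_pos x)))
  have hderiv' : deriv f = fun x =>
      Arsinhpq.g p q (Real.exp x) * Real.exp x / arsinhpq p q (Real.exp x) :=
    funext fun x => (hderiv x).deriv
  apply AntitoneOn.concaveOn_of_deriv (convex_Iio 0)
  · exact fun x _ => ((hderiv x).differentiableAt).continuousAt.continuousWithinAt
  · exact fun x _ => ((hderiv x).differentiableAt).differentiableWithinAt
  · rw [interior_Iio, hderiv']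
    intro x _ y _ hxy
    set u := Real.exp x
    set v := Real.exp y
    have hu : 0 < u := Real.exp_pos x
    have hv : 0 < v := Real.exp_pos y
    have huv : u ≤ v := Real.exp_le_exp.mpr hxy
    have hFu : 0 < arsinhpq p q u := Arsinhpq.F_pos hq0 hu
    have hFv : 0 < arsinhpq p q v := Arsinhpq.F_pos hq0 hv
    rw [div_le_div_iff₀ hFv hFu]
    have := Arsinhpq.key hp hq0 hu huv
    nlinarith [this]
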